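/- Fix 0 ≤ t < T, a continuous map r : ℝ^d → ℝ^d, a continuous map q from ℝ^d to symmetric d×d matrices, and h : ℝ^d → ℝ. Let Ū : [0,T] × ℝ^d → ℝ be continuously differentiable and satisfy the classical subsolution properties: Ū_t(s,x) + ⟨∇_x Ū(s,x), r(x)⟩ − (1/2)⟨∇_x Ū(s,x), q(x) ∇_x Ū(s,x)⟩ ≥ 0 for all (s,x) ∈ (0,T) × ℝ^d, and Ū(T,x) ≤ h(x) for all x. Then for every continuously differentiable path φ : [t,T] → ℝ^d with φ(t) = x, one has ∫_t^T [⟨∇_x Ū(s,φ(s)), φ'(s) − r(φ(s))⟩ + (1/2)⟨∇_x Ū(s,φ(s)), q(φ(s)) ∇_x Ū(s,φ(s))⟩] ds ≤ h(φ(T)) − Ū(t,x). -/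

import Mathlib

open MeasureTheory intervalIntegral Matrix
open scoped RealInnerProductSpace

lemma chain_rule_aux {E : Type*} [NormedAddCommGroup E] [InnerProductSpace ℝ E] [CompleteSpace E]
    (U : ℝ → E → ℝ) (Ut : ℝ → E → ℝ) (Ux : ℝ → E → E)
    (hUt : ∀ s x, HasDerivAt (fun τ => U τ x) (Ut s x) s)
    (hUx : ∀ s x, HasGradientAt (fun y => U s y) (Ux s x) x)
    (hUtc : Continuous fun p : ℝ × E => Ut p.1 p.2)
    (φ : ℝ → E) (v : E) (s : ℝ) (hφs : HasDerivAt φ v s) :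
    HasDerivAt (fun τ => U τ (φ τ)) (Ut s (φ s) + ⟪Ux s (φ s), v⟫) s := by
  have h2 : HasDerivAt (fun τ => U s (φ τ)) ⟪Ux s (φ s), v⟫ s := by
    have := ((hUx s (φ s)).hasFDerivAt).comp_hasDerivAt s hφs
    exact this
  have key : HasDerivAt (fun τ => U τ (φ τ) - U s (φ τ)) (Ut s (φ s)) s := by
    rw [hasDerivAt_iff_isLittleO, Asymptotics.isLittleO_iff]
    intro ε hε
    set c := Ut s (φ s) with hc
    have hcont : ContinuousAt (fun p : ℝ × E => Ut p.1 p.2) (s, φ s) := hUtc.continuousAt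
    rw [Metric.continuousAt_iff] at hcont
    obtain ⟨δ, hδ, hδ'⟩ := hcont ε hε
    have hφc : ContinuousAt φ s := hφs.continuousAt
    have hev : ∀ᶠ τ in nhds s, |τ - s| < δ ∧ dist (φ τ) (φ s) < δ := by
      filter_upwards [Metric.eventually_nhds_iff_ball.2
          ⟨δ, hδ, fun y hy => hy⟩,
        hφc.eventually (Metric.ball_mem_nhds (φ s) hδ)] with τ h1 h2
      exact ⟨by simpa [Real.dist_eq] using Metric.mem_ball.1 h1, h2⟩
    filter_upwards [hev] with τ ⟨h1, h2⟩
    have hbound : ∀ u ∈ Set.uIcc s τ,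
        HasDerivWithinAt (fun u => U u (φ τ) - u • c) (Ut u (φ τ) - c) (Set.uIcc s τ) u :=
      fun u _ => (((hUt u (φ τ)).sub ((hasDerivAt_id u).smul_const c)).hasDerivWithinAt).congr_deriv
        (by simp)
    have hC : ∀ u ∈ Set.uIcc s τ, ‖Ut u (φ τ) - c‖ ≤ ε := by
      intro u hu
      have hus : |u - s| ≤ |τ - s| := by
        rcases Set.mem_uIcc.1 hu with h | h <;>
          · rw [abs_sub_le_iff]
            constructor <;> nlinarith [le_abs_self (τ - s), neg_abs_le (τ - s), h.1, h.2]
      have : dist ((u, φ τ) : ℝ × E) (s, φ s) < δ := by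
        rw [Prod.dist_eq]
        exact max_lt (lt_of_le_of_lt (by simpa [Real.dist_eq] using hus) h1) h2
      have := hδ' this
      simpa [Real.dist_eq, hc] using this.le
    have := (convex_uIcc s τ).norm_image_sub_le_of_norm_hasDerivWithin_le
      hbound hC Set.left_mem_uIcc Set.right_mem_uIcc
    calc ‖(fun τ => U τ (φ τ) - U s (φ τ)) τ - (fun τ => U τ (φ τ) - U s (φ τ)) s - (τ - s) • c‖
        = ‖(U τ (φ τ) - τ • c) - (U s (φ τ) - s • c)‖ := by
          simp only [smul_eq_mul]; ring_nf
      _ ≤ ε * ‖τ - s‖ := this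
  simpa [Pi.add_def] using key.add h2


/-- A classical subsolution `Ū` of the HJB equation
`U_t + ⟨∇U, r⟩ − (1/2)⟨∇U, q ∇U⟩ = 0`, `U(T,·) = h`, satisfies along any C¹ path
`φ` with `φ(t) = x` the integral bound
`∫_t^T [⟨∇Ū, φ' − r(φ)⟩ + (1/2)⟨∇Ū, q(φ)∇Ū⟩] ds ≤ h(φ(T)) − Ū(t,x)`. -/
theorem subsolution_path_bound
    (d : ℕ) (t T : ℝ) (ht : 0 ≤ t) (htT : t < T)
    (r : EuclideanSpace ℝ (Fin d) → EuclideanSpace ℝ (Fin d)) (hr : Continuous r)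
    (q : EuclideanSpace ℝ (Fin d) → Matrix (Fin d) (Fin d) ℝ)
    (hq : Continuous q) (hqsymm : ∀ x, (q x).IsSymm)
    (h : EuclideanSpace ℝ (Fin d) → ℝ)
    (Ubar : ℝ → EuclideanSpace ℝ (Fin d) → ℝ)
    (Ut : ℝ → EuclideanSpace ℝ (Fin d) → ℝ)
    (Ux : ℝ → EuclideanSpace ℝ (Fin d) → EuclideanSpace ℝ (Fin d))
    (hUt : ∀ s x, HasDerivAt (fun τ => Ubar τ x) (Ut s x) s)
    (hUx : ∀ s x, HasGradientAt (fun y => Ubar s y) (Ux s x) x)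
    (hUtc : Continuous fun p : ℝ × EuclideanSpace ℝ (Fin d) => Ut p.1 p.2)
    (hUxc : Continuous fun p : ℝ × EuclideanSpace ℝ (Fin d) => Ux p.1 p.2)
    (hsub : ∀ s ∈ Set.Ioo (0 : ℝ) T, ∀ x,
      Ut s x + ⟪Ux s x, r x⟫
        - (1 / 2) * ⟪Ux s x, Matrix.toEuclideanLin (q x) (Ux s x)⟫ ≥ 0)
    (hterm : ∀ x, Ubar T x ≤ h x)
    (x : EuclideanSpace ℝ (Fin d))
    (φ φ' : ℝ → EuclideanSpace ℝ (Fin d))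
    (hφ : ∀ s ∈ Set.Icc t T, HasDerivAt φ (φ' s) s)
    (hφ' : ContinuousOn φ' (Set.Icc t T))
    (hφt : φ t = x) :
    (∫ s in t..T,
        (⟪Ux s (φ s), φ' s - r (φ s)⟫
          + (1 / 2) * ⟪Ux s (φ s), Matrix.toEuclideanLin (q (φ s)) (Ux s (φ s))⟫))
      ≤ h (φ T) - Ubar t x := by
  set F : ℝ → ℝ := fun s =>
    ⟪Ux s (φ s), φ' s - r (φ s)⟫
      + (1 / 2) * ⟪Ux s (φ s), Matrix.toEuclideanLin (q (φ s)) (Ux s (φ s))⟫ with hF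
  set G : ℝ → ℝ := fun s => Ut s (φ s) + ⟪Ux s (φ s), φ' s⟫ with hG
  have hIcc : Set.uIcc t T = Set.Icc t T := Set.uIcc_of_le htT.le
  have hφcont : ContinuousOn φ (Set.Icc t T) := fun s hs =>
    (hφ s hs).continuousAt.continuousWithinAt
  have hpair : ContinuousOn (fun s => ((s : ℝ), φ s)) (Set.Icc t T) :=
    (continuousOn_id).prodMk hφcont
  have hUxφ : ContinuousOn (fun s => Ux s (φ s)) (Set.Icc t T) := by
    exact hUxc.comp_continuousOn hpair
  have hUtφ : ContinuousOn (fun s => Ut s (φ s)) (Set.Icc t T) := by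
    exact hUtc.comp_continuousOn hpair
  have hqφ : ContinuousOn (fun s => Matrix.toEuclideanLin (q (φ s)) (Ux s (φ s)))
      (Set.Icc t T) := by
    simp only [Matrix.toEuclideanLin_apply]
    have hmv : Continuous (fun p : Matrix (Fin d) (Fin d) ℝ × (Fin d → ℝ) => p.1 *ᵥ p.2) :=
      continuous_fst.matrix_mulVec continuous_snd
    exact (PiLp.continuous_toLp (p := 2) (β := fun _ : Fin d => ℝ)).comp_continuousOn
      (hmv.comp_continuousOn ((hq.comp_continuousOn hφcont).prodMk
        ((PiLp.continuous_ofLp (p := 2) (β := fun _ : Fin d => ℝ)).comp_continuousOn hUxφ)))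
  have hGcont : ContinuousOn G (Set.Icc t T) :=
    hUtφ.add (hUxφ.inner hφ')
  have hFcont : ContinuousOn F (Set.Icc t T) :=
    (hUxφ.inner (hφ'.sub (hr.comp_continuousOn hφcont))).add
      (continuousOn_const.mul (hUxφ.inner hqφ))
  have hGint : IntervalIntegrable G volume t T := by
    rw [intervalIntegrable_iff_integrableOn_Icc_of_le htT.le]
    exact hGcont.integrableOn_compact isCompact_Icc
  have hFint : IntervalIntegrable F volume t T := by
    rw [intervalIntegrable_iff_integrableOn_Icc_of_le htT.le]
    exact hFcont.integrableOn_compact isCompact_Icc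
  have hFTC : (∫ s in t..T, G s) = Ubar T (φ T) - Ubar t (φ t) := by
    refine integral_eq_sub_of_hasDerivAt (f := fun s => Ubar s (φ s)) (fun s hs => ?_) hGint
    rw [hIcc] at hs
    exact chain_rule_aux Ubar Ut Ux hUt hUx hUtc φ (φ' s) s (hφ s hs)
  have hmono : (∫ s in t..T, F s) ≤ ∫ s in t..T, G s := by
    refine integral_mono_ae_restrict htT.le hFint hGint ?_
    rw [← Measure.restrict_congr_set Ioo_ae_eq_Icc]
    filter_upwards [ae_restrict_mem measurableSet_Ioo] with s hs
    have hs0 : s ∈ Set.Ioo (0 : ℝ) T := ⟨lt_of_le_of_lt ht hs.1, hs.2⟩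
    have := hsub s hs0 (φ s)
    have hinner : ⟪Ux s (φ s), φ' s - r (φ s)⟫
        = ⟪Ux s (φ s), φ' s⟫ - ⟪Ux s (φ s), r (φ s)⟫ := inner_sub_right _ _ _
    simp only [hF, hG]
    rw [hinner]
    linarith
  calc (∫ s in t..T, F s) ≤ ∫ s in t..T, G s := hmono
    _ = Ubar T (φ T) - Ubar t (φ t) := hFTC
    _ ≤ h (φ T) - Ubar t x := by rw [hφt]; linarith [hterm (φ T)]
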